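/- arXiv:1707.03083 — 2 statements merged into one kernel-verified Lean document; each statement's English description precedes it below -/
import Mathlib

section
/- Efron–Stein inequality: let X₁,…,Xₙ, X₁′,…,Xₙ′ be independent random variables taking values in a space S, with Xᵢ′ distributed identically to Xᵢ, and let f : Sⁿ → ℝ be measurable with f(X₁,…,Xₙ) square-integrable. Then Var[f(X₁,…,Xₙ)] ≤ (1/2)·Σᵢ₌₁ⁿ E[(f(X₁,…,Xₙ) − f(X₁,…,Xᵢ′,…,Xₙ))²]. -/
open MeasureTheory ProbabilityTheory

section helpers

variable {A : Type*} [MeasurableSpace A] {μ : Measure A}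

lemma mulIntL2 {f g : A → ℝ} (hf : MemLp f 2 μ) (hg : MemLp g 2 μ) :
    Integrable (fun x => f x * g x) μ := by
  have h := (((hf.add hg).integrable_sq.sub hf.integrable_sq).sub hg.integrable_sq).div_const 2
  refine h.congr (Filter.Eventually.of_forall fun x => ?_)
  simp only [Pi.sub_apply, Pi.add_apply]
  ring

lemma sqIntLe [IsProbabilityMeasure μ] {f : A → ℝ} (hf : MemLp f 2 μ) :
    (∫ x, f x ∂μ) ^ 2 ≤ ∫ x, f x ^ 2 ∂μ := by
  have h := variance_nonneg f μ
  rw [variance_eq_sub hf] at h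
  simp only [Pi.pow_apply] at h
  linarith

lemma intCompMP {B : Type*} [MeasurableSpace B] {ν : Measure B} {T : A → B}
    (hT : MeasurePreserving T μ ν) {g : B → ℝ} (hg : AEStronglyMeasurable g ν) :
    ∫ x, g (T x) ∂μ = ∫ y, g y ∂ν := by
  have h := integral_map hT.aemeasurable (hT.map_eq.symm ▸ hg)
  rw [hT.map_eq] at h
  exact h.symm

lemma varCompMP {B : Type*} [MeasurableSpace B] {ν : Measure B} [IsProbabilityMeasure μ]
    [IsProbabilityMeasure ν] {T : A → B} (hT : MeasurePreserving T μ ν) {g : B → ℝ}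
    (hg2 : MemLp g 2 ν) :
    variance (fun x => g (T x)) μ = variance g ν := by
  have h1 : MemLp (fun x => g (T x)) 2 μ := hg2.comp_measurePreserving hT
  rw [variance_eq_sub hg2, variance_eq_sub h1]
  simp only [Pi.pow_apply]
  rw [intCompMP hT hg2.aestronglyMeasurable,
    intCompMP hT (g := fun y => g y ^ 2) (hg2.aestronglyMeasurable.pow 2)]

end helpers

section twospace

variable {A B : Type*} [MeasurableSpace A] [MeasurableSpace B]
  {α : Measure A} {β : Measure B} [IsProbabilityMeasure α] [IsProbabilityMeasure β]
  {F : A × B → ℝ}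

lemma mpSnd : MeasurePreserving (Prod.snd : A × B → B) (α.prod β) β :=
  ⟨measurable_snd, by simp⟩

lemma mpFst : MeasurePreserving (Prod.fst : A × B → A) (α.prod β) α :=
  ⟨measurable_fst, by simp⟩

lemma tsSectionsR (hFm : Measurable F) (hF2 : MemLp F 2 (α.prod β)) :
    ∀ᵐ a ∂α, MemLp (fun b => F (a, b)) 2 β := by
  filter_upwards [hF2.integrable_sq.prod_right_ae] with a ha
  exact (memLp_two_iff_integrable_sq
    ((hFm.comp measurable_prodMk_left)).aestronglyMeasurable).2 ha

lemma tsSectionsL (hFm : Measurable F) (hF2 : MemLp F 2 (α.prod β)) :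
    ∀ᵐ b ∂β, MemLp (fun a => F (a, b)) 2 α := by
  filter_upwards [hF2.integrable_sq.swap.prod_right_ae] with b hb
  exact (memLp_two_iff_integrable_sq
    ((hFm.comp measurable_prodMk_right)).aestronglyMeasurable).2 hb

lemma tsHmem (hFm : Measurable F) (hF2 : MemLp F 2 (α.prod β)) :
    MemLp (fun a => ∫ b, F (a, b) ∂β) 2 α := by
  have hsm : StronglyMeasurable (fun a => ∫ b, F (a, b) ∂β) :=
    hFm.stronglyMeasurable.integral_prod_right'
  refine (memLp_two_iff_integrable_sq hsm.aestronglyMeasurable).2 ?_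
  have hq : Integrable (fun a => ∫ b, F (a, b) ^ 2 ∂β) α := by
    exact Integrable.integral_prod_left (f := fun p => F p ^ 2) hF2.integrable_sq
  refine hq.mono' ((hsm.pow 2).aestronglyMeasurable) ?_
  filter_upwards [tsSectionsR hFm hF2] with a ha
  rw [Real.norm_eq_abs, abs_of_nonneg (sq_nonneg _)]
  exact sqIntLe ha

lemma tsMmem (hFm : Measurable F) (hF2 : MemLp F 2 (α.prod β)) :
    MemLp (fun b => ∫ a, F (a, b) ∂α) 2 β := by
  have hsm : StronglyMeasurable (fun b => ∫ a, F (a, b) ∂α) :=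
    hFm.stronglyMeasurable.integral_prod_left'
  refine (memLp_two_iff_integrable_sq hsm.aestronglyMeasurable).2 ?_
  have hq : Integrable (fun b => ∫ a, F (a, b) ^ 2 ∂α) β := by
    exact Integrable.integral_prod_right (f := fun p => F p ^ 2) hF2.integrable_sq
  refine hq.mono' ((hsm.pow 2).aestronglyMeasurable) ?_
  filter_upwards [tsSectionsL hFm hF2] with b hb
  rw [Real.norm_eq_abs, abs_of_nonneg (sq_nonneg _)]
  exact sqIntLe hb

end twospace
section twospace2

set_option linter.unusedSectionVars false

variable {A B : Type*} [MeasurableSpace A] [MeasurableSpace B]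
  {α : Measure A} {β : Measure B} [IsProbabilityMeasure α] [IsProbabilityMeasure β]
  {F : A × B → ℝ}

/-- Variance decomposition / tensorization step. -/
lemma varProdLe (hFm : Measurable F) (hF2 : MemLp F 2 (α.prod β)) :
    variance F (α.prod β) ≤ (∫ p, (F p - ∫ a, F (a, p.2) ∂α) ^ 2 ∂(α.prod β))
      + ∫ a, variance (fun b => F (a, b)) β ∂α := by
  set m : B → ℝ := fun b => ∫ a, F (a, b) ∂α with hm_def
  set h : A → ℝ := fun a => ∫ b, F (a, b) ∂β with hh_def
  have hmsm : StronglyMeasurable m := hFm.stronglyMeasurable.integral_prod_left'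
  have hhsm : StronglyMeasurable h := hFm.stronglyMeasurable.integral_prod_right'
  have hm2 : MemLp m 2 β := tsMmem hFm hF2
  have hh2 : MemLp h 2 α := tsHmem hFm hF2
  have hFint : Integrable F (α.prod β) := hF2.integrable one_le_two
  have hc : ∫ p, F p ∂(α.prod β) = ∫ a, h a ∂α := integral_prod _ hFint
  have hcm : ∫ p, F p ∂(α.prod β) = ∫ b, m b ∂β := integral_prod_symm _ hFint
  -- second term
  have hq_int : Integrable (fun a => ∫ b, F (a, b) ^ 2 ∂β) α :=
    Integrable.integral_prod_left (f := fun p => F p ^ 2) hF2.integrable_sq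
  have hsec : ∫ a, variance (fun b => F (a, b)) β ∂α
      = (∫ a, ∫ b, F (a, b) ^ 2 ∂β ∂α) - ∫ a, h a ^ 2 ∂α := by
    rw [← integral_sub hq_int hh2.integrable_sq]
    refine integral_congr_ae ?_
    filter_upwards [tsSectionsR hFm hF2] with a ha
    rw [variance_eq_sub ha]
    simp only [Pi.pow_apply]
    rfl
  have hF2int : ∫ p, F p ^ 2 ∂(α.prod β) = ∫ a, ∫ b, F (a, b) ^ 2 ∂β ∂α :=
    integral_prod _ hF2.integrable_sq
  -- first term
  have hmsnd2 : MemLp (fun p : A × B => m p.2) 2 (α.prod β) :=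
    hm2.comp_measurePreserving mpSnd
  have hsub2 : MemLp (fun p => F p - m p.2) 2 (α.prod β) := hF2.sub hmsnd2
  have hsubint : Integrable (fun p => (F p - m p.2) ^ 2) (α.prod β) := hsub2.integrable_sq
  set c : ℝ := ∫ p, F p ∂(α.prod β) with hc_def
  have key_ae : ∀ᵐ a ∂α, (h a - c) ^ 2 ≤ ∫ b, (F (a, b) - m b) ^ 2 ∂β := by
    filter_upwards [tsSectionsR hFm hF2] with a ha
    have hdiff : MemLp (fun b => F (a, b) - m b) 2 β := ha.sub hm2
    have : h a - c = ∫ b, (F (a, b) - m b) ∂β := by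
      rw [integral_sub (ha.integrable one_le_two) (hm2.integrable one_le_two), hcm]
    rw [this]
    exact sqIntLe hdiff
  have step1 : variance h α ≤ ∫ p, (F p - m p.2) ^ 2 ∂(α.prod β) := by
    have hvh : variance h α = ∫ a, (h a - c) ^ 2 ∂α := by
      rw [variance_eq_integral hh2.aestronglyMeasurable.aemeasurable]
      simp only [Pi.pow_apply, Pi.sub_apply, hc, hc_def]
    rw [hvh, integral_prod _ hsubint]
    refine integral_mono_ae ((hh2.sub (memLp_const c)).integrable_sq) ?_ key_ae
    exact Integrable.integral_prod_left (f := fun p => (F p - m p.2) ^ 2) hsubint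
  have hvar : variance F (α.prod β)
      = variance h α + ∫ a, variance (fun b => F (a, b)) β ∂α := by
    rw [variance_eq_sub hF2, variance_eq_sub hh2, hsec]
    simp only [Pi.pow_apply]
    rw [hF2int, ← hc_def, hc]
    ring
  rw [hvar]
  exact add_le_add_left step1 _

end twospace2
section twospace3

set_option linter.unusedSectionVars false

variable {A B : Type*} [MeasurableSpace A] [MeasurableSpace B]
  {α : Measure A} {β : Measure B} [IsProbabilityMeasure α] [IsProbabilityMeasure β]
  {F : A × B → ℝ}

lemma mpResample :
    MeasurePreserving (fun q : (A × B) × A => (q.2, q.1.2)) ((α.prod β).prod α) (α.prod β) := by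
  have h1 : MeasurePreserving (Prod.swap : (A × B) × A → A × (A × B))
      ((α.prod β).prod α) (α.prod (α.prod β)) := Measure.measurePreserving_swap
  have h2 : MeasurePreserving (Prod.map (id : A → A) (Prod.snd : A × B → B))
      (α.prod (α.prod β)) (α.prod β) := (MeasurePreserving.id α).prod mpSnd
  exact h2.comp h1

/-- conditional variance equals half the mean resampled square difference -/
lemma halfIdentity (hFm : Measurable F) (hF2 : MemLp F 2 (α.prod β)) :
    ∫ p, (F p - ∫ a, F (a, p.2) ∂α) ^ 2 ∂(α.prod β)
      = (1 / 2) * ∫ q, (F q.1 - F (q.2, q.1.2)) ^ 2 ∂((α.prod β).prod α) := by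
  set m : B → ℝ := fun b => ∫ a, F (a, b) ∂α with hm_def
  have hmsm : StronglyMeasurable m := hFm.stronglyMeasurable.integral_prod_left'
  have hm2 : MemLp m 2 β := tsMmem hFm hF2
  have hmsnd2 : MemLp (fun p : A × B => m p.2) 2 (α.prod β) :=
    hm2.comp_measurePreserving mpSnd
  have mp1 : MeasurePreserving (Prod.fst : (A × B) × A → A × B) ((α.prod β).prod α) (α.prod β) :=
    mpFst
  have hU2 : MemLp (fun q : (A × B) × A => F q.1) 2 ((α.prod β).prod α) :=
    hF2.comp_measurePreserving mp1
  have hV2 : MemLp (fun q : (A × B) × A => F (q.2, q.1.2)) 2 ((α.prod β).prod α) :=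
    hF2.comp_measurePreserving mpResample
  -- J' : ∫ m², appears in both sides
  have hmm : Integrable (fun b => m b * m b) β := mulIntL2 hm2 hm2
  have hFm_int : Integrable (fun p : A × B => F p * m p.2) (α.prod β) := mulIntL2 hF2 hmsnd2
  -- ∫ F·(m∘snd) = ∫ m·m
  have hI : ∫ p, F p * m p.2 ∂(α.prod β) = ∫ b, m b * m b ∂β := by
    rw [integral_prod_symm _ hFm_int]
    refine integral_congr_ae (Filter.Eventually.of_forall fun b => ?_)
    simp only
    rw [integral_mul_const]
  -- ∫ (m∘snd)² = ∫ m²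
  have hJ : ∫ p : A × B, m p.2 ^ 2 ∂(α.prod β) = ∫ b, m b ^ 2 ∂β :=
    intCompMP mpSnd (g := fun b => m b ^ 2) (hmsm.pow 2).aestronglyMeasurable
  -- ∫_Q (F∘fst)² = ∫ F²
  have hU : ∫ q : (A × B) × A, F q.1 ^ 2 ∂((α.prod β).prod α) = ∫ p, F p ^ 2 ∂(α.prod β) :=
    intCompMP mp1 (g := fun p => F p ^ 2) (hFm.stronglyMeasurable.pow 2).aestronglyMeasurable
  have hV : ∫ q : (A × B) × A, F (q.2, q.1.2) ^ 2 ∂((α.prod β).prod α)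
      = ∫ p, F p ^ 2 ∂(α.prod β) :=
    intCompMP mpResample (g := fun p => F p ^ 2)
      (hFm.stronglyMeasurable.pow 2).aestronglyMeasurable
  -- cross term on Q
  have hUV_int : Integrable (fun q : (A × B) × A => F q.1 * F (q.2, q.1.2))
      ((α.prod β).prod α) := mulIntL2 hU2 hV2
  have hUV : ∫ q : (A × B) × A, F q.1 * F (q.2, q.1.2) ∂((α.prod β).prod α)
      = ∫ p, F p * m p.2 ∂(α.prod β) := by
    rw [integral_prod _ hUV_int]
    refine integral_congr_ae (Filter.Eventually.of_forall fun p => ?_)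
    simp only
    rw [integral_const_mul]
  -- expand LHS
  have hLHS : ∫ p, (F p - m p.2) ^ 2 ∂(α.prod β)
      = (∫ p, F p ^ 2 ∂(α.prod β)) - 2 * (∫ p, F p * m p.2 ∂(α.prod β))
        + ∫ p : A × B, m p.2 ^ 2 ∂(α.prod β) := by
    have e1 : ∀ p : A × B, (F p - m p.2) ^ 2
        = F p ^ 2 - 2 * (F p * m p.2) + m p.2 ^ 2 := fun p => by ring
    simp_rw [e1]
    have h12 : Integrable (fun p : A × B => F p ^ 2 - 2 * (F p * m p.2)) (α.prod β) :=
      (hF2.integrable_sq).sub (hFm_int.const_mul 2)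
    rw [integral_add h12 hmsnd2.integrable_sq,
      integral_sub hF2.integrable_sq (hFm_int.const_mul 2), integral_const_mul]
  -- expand RHS
  have hRHS : ∫ q : (A × B) × A, (F q.1 - F (q.2, q.1.2)) ^ 2 ∂((α.prod β).prod α)
      = (∫ q : (A × B) × A, F q.1 ^ 2 ∂((α.prod β).prod α))
        - 2 * (∫ q : (A × B) × A, F q.1 * F (q.2, q.1.2) ∂((α.prod β).prod α))
        + ∫ q : (A × B) × A, F (q.2, q.1.2) ^ 2 ∂((α.prod β).prod α) := by
    have e1 : ∀ q : (A × B) × A, (F q.1 - F (q.2, q.1.2)) ^ 2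
        = F q.1 ^ 2 - 2 * (F q.1 * F (q.2, q.1.2)) + F (q.2, q.1.2) ^ 2 := fun q => by ring
    simp_rw [e1]
    have h12 : Integrable (fun q : (A × B) × A => F q.1 ^ 2 - 2 * (F q.1 * F (q.2, q.1.2)))
        ((α.prod β).prod α) := (hU2.integrable_sq).sub (hUV_int.const_mul 2)
    rw [integral_add h12 hV2.integrable_sq,
      integral_sub hU2.integrable_sq (hUV_int.const_mul 2), integral_const_mul]
  rw [hLHS, hRHS, hU, hV, hUV, hI, hJ]
  have hmm2 : ∫ b, m b * m b ∂β = ∫ b, m b ^ 2 ∂β := by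
    refine integral_congr_ae (Filter.Eventually.of_forall fun b => ?_)
    ring
  rw [hmm2]
  ring

end twospace3
section pilevel

set_option linter.unusedSectionVars false

variable {S : Type*} [MeasurableSpace S]

lemma coordF_fun {n : ℕ} (i : Fin (n + 1)) (g : (Fin (n + 1) → S) → ℝ) :
    (fun p : S × (Fin n → S) => g (Fin.insertNth i p.1 p.2))
      = g ∘ (MeasurableEquiv.piFinSuccAbove (fun _ => S) i).symm := by
  funext p
  rfl

lemma coordF_meas {n : ℕ} (i : Fin (n + 1)) {g : (Fin (n + 1) → S) → ℝ} (hg : Measurable g) :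
    Measurable (fun p : S × (Fin n → S) => g (Fin.insertNth i p.1 p.2)) := by
  rw [coordF_fun]
  exact hg.comp (MeasurableEquiv.measurable _)

lemma coordF_comp {n : ℕ} (i : Fin (n + 1)) (g : (Fin (n + 1) → S) → ℝ) (x : Fin (n + 1) → S) :
    g (Fin.insertNth i ((MeasurableEquiv.piFinSuccAbove (fun _ => S) i) x).1
        ((MeasurableEquiv.piFinSuccAbove (fun _ => S) i) x).2) = g x := by
  have h := congrFun (coordF_fun i g) ((MeasurableEquiv.piFinSuccAbove (fun _ => S) i) x)
  simpa using h

variable {n : ℕ} (ν : Fin (n + 1) → Measure S) [∀ i, IsProbabilityMeasure (ν i)]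

lemma coordF_L2 (i : Fin (n + 1)) {g : (Fin (n + 1) → S) → ℝ}
    (h2 : MemLp g 2 (Measure.pi ν)) :
    MemLp (fun p : S × (Fin n → S) => g (Fin.insertNth i p.1 p.2)) 2
      ((ν i).prod (Measure.pi fun j => ν (i.succAbove j))) := by
  rw [coordF_fun]
  exact h2.comp_measurePreserving
    (MeasurePreserving.symm _ (measurePreserving_piFinSuccAbove ν i))

lemma mkMemL2 (i : Fin (n + 1)) {g : (Fin (n + 1) → S) → ℝ} (hg : Measurable g)
    (h2 : MemLp g 2 (Measure.pi ν)) :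
    MemLp (fun x => ∫ t, g (Function.update x i t) ∂ν i) 2 (Measure.pi ν) := by
  set e := MeasurableEquiv.piFinSuccAbove (fun _ : Fin (n + 1) => S) i with he
  have hF2 := coordF_L2 ν i h2
  have hFm := coordF_meas i hg
  have hm2 : MemLp (fun r => ∫ t, g (Fin.insertNth i t r) ∂ν i) 2
      (Measure.pi fun j => ν (i.succAbove j)) := tsMmem hFm hF2
  have hmp : MeasurePreserving (fun x => (e x).2) (Measure.pi ν)
      (Measure.pi fun j => ν (i.succAbove j)) :=
    mpSnd.comp (measurePreserving_piFinSuccAbove ν i)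
  have h := hm2.comp_measurePreserving hmp
  have heq : ((fun r => ∫ t, g (Fin.insertNth i t r) ∂ν i) ∘ fun x => (e x).2)
      = fun x => ∫ t, g (Function.update x i t) ∂ν i := by
    funext x
    show ∫ t, g (Fin.insertNth i t (e x).2) ∂ν i = _
    refine integral_congr_ae (Filter.Eventually.of_forall fun t => ?_)
    have h2' : (e x).2 = Fin.removeNth i x := rfl
    simp only [h2', Fin.insertNth_removeNth]
  rwa [heq] at h

end pilevel
theorem es_tensor {S : Type*} [MeasurableSpace S] (n : ℕ) :
    ∀ (ν : Fin n → Measure S), (∀ i, IsProbabilityMeasure (ν i)) →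
    ∀ (g : (Fin n → S) → ℝ), Measurable g → MemLp g 2 (Measure.pi ν) →
    variance g (Measure.pi ν)
      ≤ ∑ i, ∫ x, (g x - ∫ t, g (Function.update x i t) ∂ν i) ^ 2 ∂Measure.pi ν := by
  induction n with
  | zero =>
    intro ν hprob g hg h2
    haveI := hprob
    have hgc : g = fun _ => g (fun j => j.elim0) :=
      funext fun x => congrArg g (Subsingleton.elim _ _)
    simp only [Finset.univ_eq_empty, Finset.sum_empty]
    rw [hgc, variance_eq_sub (memLp_const _)]
    simp [Pi.pow_apply]
  | succ k ih =>
    intro ν hprob g hg h2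
    haveI := hprob
    haveI : ∀ j : Fin k, IsProbabilityMeasure (ν ((0 : Fin (k + 1)).succAbove j)) :=
      fun j => hprob _
    set e := MeasurableEquiv.piFinSuccAbove (fun _ : Fin (k + 1) => S) 0 with he
    have hmp := measurePreserving_piFinSuccAbove ν 0
    set π' : Measure (Fin k → S) :=
      Measure.pi (fun j => ν ((0 : Fin (k + 1)).succAbove j)) with hπ'
    set F : S × (Fin k → S) → ℝ := fun p => g (Fin.insertNth 0 p.1 p.2) with hF
    have hFm : Measurable F := coordF_meas 0 hg
    have hF2 : MemLp F 2 ((ν 0).prod π') := coordF_L2 ν 0 h2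
    -- variance transfer
    have hvar : variance g (Measure.pi ν) = variance F ((ν 0).prod π') := by
      rw [← varCompMP hmp hF2]
      congr 1
      funext x
      exact (coordF_comp 0 g x).symm
    -- the update-mean functions
    set msq : Fin (k + 1) → (Fin (k + 1) → S) → ℝ :=
      fun i x => ∫ t, g (Function.update x i t) ∂ν i with hmsq
    set M : Fin k → (S × (Fin k → S)) → ℝ :=
      fun j p => ∫ t, F (p.1, Function.update p.2 j t) ∂ν ((0 : Fin (k + 1)).succAbove j)
      with hM
    have hMcomp : ∀ j, M j = (msq j.succ) ∘ e.symm := by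
      intro j
      funext p
      refine integral_congr_ae (Filter.Eventually.of_forall fun t => ?_)
      show F (p.1, Function.update p.2 j t) = g (Function.update (e.symm p) j.succ t)
      have h1 : e.symm p = Fin.insertNth 0 p.1 p.2 := rfl
      rw [h1, hF]
      simp only [Fin.insertNth_zero', Fin.cons_update]
    have hmsq2 : ∀ i, MemLp (msq i) 2 (Measure.pi ν) := fun i => mkMemL2 ν i hg h2
    have hM2 : ∀ j, MemLp (M j) 2 ((ν 0).prod π') := by
      intro j
      rw [hMcomp j]
      exact (hmsq2 j.succ).comp_measurePreserving (MeasurePreserving.symm _ hmp)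
    have hKint : ∀ j, Integrable (fun p => (F p - M j p) ^ 2) ((ν 0).prod π') :=
      fun j => (hF2.sub (hM2 j)).integrable_sq
    -- first term transport
    have hterm0 : ∫ p, (F p - ∫ a, F (a, p.2) ∂ν 0) ^ 2 ∂((ν 0).prod π')
        = ∫ x, (g x - msq 0 x) ^ 2 ∂Measure.pi ν := by
      have hmF : StronglyMeasurable (fun r => ∫ a, F (a, r) ∂ν 0) :=
        hFm.stronglyMeasurable.integral_prod_left'
      have hΨm : AEStronglyMeasurable (fun p : S × (Fin k → S) =>
          (F p - ∫ a, F (a, p.2) ∂ν 0) ^ 2) ((ν 0).prod π') :=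
        ((hFm.stronglyMeasurable.sub (hmF.comp_measurable measurable_snd)).pow 2
          ).aestronglyMeasurable
      rw [← intCompMP hmp hΨm]
      refine integral_congr_ae (Filter.Eventually.of_forall fun x => ?_)
      show (F (e x) - ∫ a, F (a, (e x).2) ∂ν 0) ^ 2 = (g x - msq 0 x) ^ 2
      have h1 : F (e x) = g x := coordF_comp 0 g x
      have h2' : (∫ a, F (a, (e x).2) ∂ν 0) = msq 0 x := by
        refine integral_congr_ae (Filter.Eventually.of_forall fun t => ?_)
        show g (Fin.insertNth 0 t (e x).2) = g (Function.update x 0 t)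
        have h3 : (e x).2 = Fin.removeNth 0 x := rfl
        simp only [h3, Fin.insertNth_removeNth]
      rw [h1, h2']
    -- second term bound
    have hsec : ∫ a, variance (fun b => F (a, b)) π' ∂ν 0
        ≤ ∑ j : Fin k, ∫ x, (g x - msq j.succ x) ^ 2 ∂Measure.pi ν := by
      have step1 : ∫ a, variance (fun b => F (a, b)) π' ∂ν 0
          ≤ ∫ a, (∑ j : Fin k, ∫ r, (F (a, r) - M j (a, r)) ^ 2 ∂π') ∂ν 0 := by
        refine integral_mono_of_nonneg ?_ ?_ ?_
        · exact Filter.Eventually.of_forall fun a => variance_nonneg _ _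
        · exact integrable_finset_sum _ fun j _ => (hKint j).integral_prod_left
        · filter_upwards [tsSectionsR hFm hF2] with a ha
          exact ih _ (fun j => hprob _) _ (hFm.comp measurable_prodMk_left) ha
      refine le_trans step1 (le_of_eq ?_)
      rw [integral_finset_sum _ fun j _ => (hKint j).integral_prod_left]
      refine Finset.sum_congr rfl fun j _ => ?_
      rw [← integral_prod _ (hKint j)]
      have hΨm : AEStronglyMeasurable (fun p => (F p - M j p) ^ 2) ((ν 0).prod π') :=
        (hKint j).aestronglyMeasurable
      rw [← intCompMP hmp hΨm]
      refine integral_congr_ae (Filter.Eventually.of_forall fun x => ?_)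
      show (F (e x) - M j (e x)) ^ 2 = (g x - msq j.succ x) ^ 2
      have h1 : F (e x) = g x := coordF_comp 0 g x
      have h2' : M j (e x) = msq j.succ x := by
        rw [hMcomp j]
        simp only [Function.comp_apply, MeasurableEquiv.symm_apply_apply]
      rw [h1, h2']
    rw [hvar, Fin.sum_univ_succ]
    refine le_trans (varProdLe hFm hF2) ?_
    rw [hterm0]
    exact add_le_add_right hsec _
theorem es_pi {S : Type*} [MeasurableSpace S] (n : ℕ) (ν : Fin n → Measure S)
    [hprob : ∀ i, IsProbabilityMeasure (ν i)] (g : (Fin n → S) → ℝ) (hg : Measurable g)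
    (h2 : MemLp g 2 (Measure.pi ν)) :
    variance g (Measure.pi ν)
      ≤ (1 / 2) * ∑ i : Fin n,
          ∫ p, (g p.1 - g (Function.update p.1 i p.2)) ^ 2 ∂((Measure.pi ν).prod (ν i)) := by
  refine le_trans (es_tensor n ν inferInstance g hg h2) ?_
  rw [Finset.mul_sum]
  refine Finset.sum_le_sum fun i _ => le_of_eq ?_
  obtain ⟨k, rfl⟩ : ∃ k, n = k + 1 := ⟨n - 1, by have := i.pos; omega⟩
  haveI : ∀ j : Fin k, IsProbabilityMeasure (ν (i.succAbove j)) := fun _ => inferInstance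
  set e := MeasurableEquiv.piFinSuccAbove (fun _ : Fin (k + 1) => S) i with he
  set π' : Measure (Fin k → S) := Measure.pi (fun j => ν (i.succAbove j)) with hπ'
  set F : S × (Fin k → S) → ℝ := fun p => g (Fin.insertNth i p.1 p.2) with hF
  have hFm : Measurable F := coordF_meas i hg
  have hF2 : MemLp F 2 ((ν i).prod π') := coordF_L2 ν i h2
  have hmp := measurePreserving_piFinSuccAbove ν i
  -- step 1 : transport the conditional-variance term
  have s1 : ∫ x, (g x - ∫ t, g (Function.update x i t) ∂ν i) ^ 2 ∂Measure.pi ν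
      = ∫ p, (F p - ∫ a, F (a, p.2) ∂ν i) ^ 2 ∂((ν i).prod π') := by
    have hmF : StronglyMeasurable (fun r => ∫ a, F (a, r) ∂ν i) :=
      hFm.stronglyMeasurable.integral_prod_left'
    have hΨm : AEStronglyMeasurable (fun p : S × (Fin k → S) =>
        (F p - ∫ a, F (a, p.2) ∂ν i) ^ 2) ((ν i).prod π') :=
      ((hFm.stronglyMeasurable.sub (hmF.comp_measurable measurable_snd)).pow 2
        ).aestronglyMeasurable
    rw [← intCompMP hmp hΨm]
    refine integral_congr_ae (Filter.Eventually.of_forall fun x => ?_)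
    show (g x - ∫ t, g (Function.update x i t) ∂ν i) ^ 2
      = (F (e x) - ∫ a, F (a, (e x).2) ∂ν i) ^ 2
    have h1 : F (e x) = g x := coordF_comp i g x
    have h2' : (∫ a, F (a, (e x).2) ∂ν i) = ∫ t, g (Function.update x i t) ∂ν i := by
      refine integral_congr_ae (Filter.Eventually.of_forall fun t => ?_)
      show g (Fin.insertNth i t (e x).2) = g (Function.update x i t)
      have h3 : (e x).2 = Fin.removeNth i x := rfl
      simp only [h3, Fin.insertNth_removeNth]
    rw [h1, h2']
  rw [s1, halfIdentity hFm hF2]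
  congr 1
  -- step 2 : transport the resampling term
  have Φpres : MeasurePreserving (fun p : (Fin (k + 1) → S) × S => (e p.1, p.2))
      ((Measure.pi ν).prod (ν i)) ((((ν i).prod π')).prod (ν i)) :=
    hmp.prod (MeasurePreserving.id _)
  have hΨm : AEStronglyMeasurable (fun q : (S × (Fin k → S)) × S =>
      (F q.1 - F (q.2, q.1.2)) ^ 2) ((((ν i).prod π')).prod (ν i)) := by
    refine (StronglyMeasurable.pow (StronglyMeasurable.sub ?_ ?_) 2).aestronglyMeasurable
    · exact hFm.stronglyMeasurable.comp_measurable measurable_fst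
    · exact hFm.stronglyMeasurable.comp_measurable
        (measurable_snd.prodMk (measurable_snd.comp measurable_fst))
  rw [← intCompMP Φpres hΨm]
  refine integral_congr_ae (Filter.Eventually.of_forall fun p => ?_)
  show (F (e p.1) - F (p.2, (e p.1).2)) ^ 2 = (g p.1 - g (Function.update p.1 i p.2)) ^ 2
  have h1 : F (e p.1) = g p.1 := coordF_comp i g p.1
  have h2' : F (p.2, (e p.1).2) = g (Function.update p.1 i p.2) := by
    show g (Fin.insertNth i p.2 (e p.1).2) = _
    have h3 : (e p.1).2 = Fin.removeNth i p.1 := rfl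
    simp only [h3, Fin.insertNth_removeNth]
  rw [h1, h2']
theorem efron_stein {Ω S : Type*} [MeasurableSpace Ω] [MeasurableSpace S]
    {μ : Measure Ω} [IsProbabilityMeasure μ] (n : ℕ)
    (X X' : Fin n → Ω → S)
    (hmeas : ∀ i, Measurable (X i)) (hmeas' : ∀ i, Measurable (X' i))
    (hindep : iIndepFun
      (Sum.elim X X' : Fin n ⊕ Fin n → Ω → S) μ)
    (hid : ∀ i, Measure.map (X' i) μ = Measure.map (X i) μ)
    (f : (Fin n → S) → ℝ) (hfmeas : Measurable f)
    (hL2 : MemLp (fun ω => f (fun i => X i ω)) 2 μ)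
    (hL2' : ∀ i, MemLp (fun ω => f (Function.update (fun j => X j ω) i (X' i ω))) 2 μ) :
    variance (fun ω => f (fun i => X i ω)) μ
      ≤ (1 / 2) * ∑ i : Fin n,
          ∫ ω, (f (fun j => X j ω) - f (Function.update (fun j => X j ω) i (X' i ω))) ^ 2 ∂μ := by
  classical
  have hκm : ∀ k, Measurable (Sum.elim X X' k : Ω → S) := by
    rintro (i | i)
    exacts [hmeas i, hmeas' i]
  set T : Ω → ((Fin n ⊕ Fin n) → S) := fun ω k => Sum.elim X X' k ω with hTdef
  have hTm : Measurable T := measurable_pi_lambda _ fun k => hκm k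
  set N : (Fin n ⊕ Fin n) → Measure S := fun k => Measure.map (Sum.elim X X' k) μ with hNdef
  haveI hNp : ∀ k, IsProbabilityMeasure (N k) :=
    fun k => Measure.isProbabilityMeasure_map (hκm k).aemeasurable
  have hlaw : Measure.map T μ = Measure.pi N := by
    refine (Measure.pi_eq fun s hs => ?_).symm
    rw [Measure.map_apply hTm (MeasurableSet.univ_pi hs)]
    have hpre : T ⁻¹' (Set.pi Set.univ s)
        = ⋂ k ∈ (Finset.univ : Finset (Fin n ⊕ Fin n)), Sum.elim X X' k ⁻¹' s k := by
      ext ω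
      simp [hTdef, Set.mem_pi]
    rw [hpre, hindep.measure_inter_preimage_eq_mul Finset.univ (fun k _ => hs k)]
    exact Finset.prod_congr rfl fun k _ => (Measure.map_apply (hκm k) (hs k)).symm
  set ν : Fin n → Measure S := fun i => N (.inl i) with hνdef
  haveI : ∀ i, IsProbabilityMeasure (ν i) := fun i => hNp _
  have hν' : (fun i : Fin n => N (.inr i)) = ν := funext fun i => hid i
  have mps : MeasurePreserving (MeasurableEquiv.sumPiEquivProdPi (fun _ : Fin n ⊕ Fin n => S))
      (Measure.pi N) ((Measure.pi ν).prod (Measure.pi ν)) := by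
    have h := measurePreserving_sumPiEquivProdPi N
    rwa [hν'] at h
  have mpT : MeasurePreserving T μ (Measure.pi N) := ⟨hTm, hlaw⟩
  have mpTot := mps.comp mpT
  have mpX : MeasurePreserving (fun ω => fun i => X i ω) μ (Measure.pi ν) :=
    mpFst.comp mpTot
  have hgpi : MemLp f 2 (Measure.pi ν) := by
    rw [← mpX.map_eq]
    exact (memLp_map_measure_iff hfmeas.aestronglyMeasurable mpX.aemeasurable).2 hL2
  have hveq : variance (fun ω => f (fun i => X i ω)) μ = variance f (Measure.pi ν) :=
    varCompMP mpX hgpi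
  have hmain := es_pi n ν f hfmeas hgpi
  rw [hveq]
  refine le_trans hmain (le_of_eq ?_)
  congr 1
  refine Finset.sum_congr rfl fun i _ => ?_
  -- transport the i-th term back to Ω
  obtain ⟨k, rfl⟩ : ∃ k, n = k + 1 := ⟨n - 1, by have := i.pos; omega⟩
  have mpEval : MeasurePreserving (fun y : Fin (k + 1) → S => y i) (Measure.pi ν) (ν i) := by
    haveI : ∀ j : Fin k, IsProbabilityMeasure (ν (i.succAbove j)) := fun _ => inferInstance
    exact mpFst.comp (measurePreserving_piFinSuccAbove ν i)
  have mpPair : MeasurePreserving (fun ω => ((fun j => X j ω), X' i ω)) μ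
      ((Measure.pi ν).prod (ν i)) :=
    ((MeasurePreserving.id _).prod mpEval).comp mpTot
  have hΨm : AEStronglyMeasurable (fun p : (Fin (k + 1) → S) × S =>
      (f p.1 - f (Function.update p.1 i p.2)) ^ 2) ((Measure.pi ν).prod (ν i)) := by
    refine (Measurable.pow ?_ measurable_const).aestronglyMeasurable
    exact (hfmeas.comp measurable_fst).sub (hfmeas.comp measurable_update')
  have key : ∫ ω, (f (fun j => X j ω)
        - f (Function.update (fun j => X j ω) i (X' i ω))) ^ 2 ∂μ
      = ∫ p, (f p.1 - f (Function.update p.1 i p.2)) ^ 2 ∂((Measure.pi ν).prod (ν i)) :=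
    intCompMP mpPair hΨm
  exact key.symm
end

section
/- Let d be odd and q, t ≥ 1 be integers. Suppose I(x₁, h) = Σ_{m=0}^{q} Σ_{ℓ=0}^{d+q} p_{m,ℓ}(x₁)·(√(1 − ((1−x₁)/h)²))^ℓ·((1−x₁)/h)^m where each coefficient p_{m,ℓ} is r−q times continuously differentiable on [1−h, 1]. Then I(x₁,h)^t has the same form with q replaced by qt, d+q replaced by (d+q)t, and coefficients that are still r−q times continuously differentiable; moreover ∫_{1−h}^{1} I(x₁,h)^t dx₁ = Σ_{i=1}^{r−q} e_i h^i + o(h^{r−q}) as h → 0 for suitable constants e_i. -/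
open Filter Set MeasureTheory intervalIntegral

private lemma bcpe_sum_Icc (n : ℕ) (f : ℕ → ℝ) :
    ∑ i ∈ Finset.Icc 1 n, f i = ∑ j ∈ Finset.range n, f (j + 1) := by
  induction n with
  | zero => simp
  | succ n ih => rw [Finset.sum_range_succ, ← ih, Finset.sum_Icc_succ_top (by omega)]

private lemma bcpe_cov (P Q : ℝ → ℝ) {h : ℝ} (hh : h ≠ 0) :
    (∫ x in (1 - h)..1, P x * Q ((1 - x) / h))
      = h * ∫ y in (0:ℝ)..1, P (1 - h * y) * Q y := by
  have e1 : (∫ y in (0:ℝ)..1, P (1 - h * y) * Q y)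
      = ∫ y in (0:ℝ)..1, (fun s => P (1 - s) * Q (s / h)) (h * y) := by
    apply intervalIntegral.integral_congr
    intro y _
    simp only [mul_div_cancel_left₀ _ hh]
  have e2 := integral_comp_mul_left (fun s => P (1 - s) * Q (s / h)) hh (a := (0:ℝ)) (b := 1)
  have e3 : (∫ s in (0:ℝ)..h, P (1 - s) * Q (s / h))
      = ∫ x in (1-h)..(1-(0:ℝ)), P x * Q ((1 - x) / h) := by
    rw [← integral_comp_sub_left (fun x => P x * Q ((1 - x) / h)) 1]
    apply intervalIntegral.integral_congr
    intro s _
    simp only [sub_sub_cancel]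
  rw [e1, e2, mul_zero, mul_one, e3]
  simp [smul_eq_mul, ← mul_assoc, mul_inv_cancel₀ hh]

/-- key single-term expansion lemma -/
private lemma bcpe_key (n : ℕ) (P Q : ℝ → ℝ) (hP : ContDiffOn ℝ n P (Icc 0 1))
    (hQ : Continuous Q) :
    ∃ e : ℕ → ℝ,
      (fun h : ℝ => (∫ x in (1 - h)..1, P x * Q ((1 - x) / h))
          - ∑ i ∈ Finset.Icc 1 n, e i * h ^ i)
        =o[nhdsWithin 0 (Set.Ioi 0)] fun h : ℝ => h ^ n := by
  -- reduce to a polynomial-type bound on Ioc 0 1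
  suffices H : ∃ e : ℕ → ℝ, ∃ C : ℝ, ∀ h ∈ Ioc (0:ℝ) 1,
      |(∫ x in (1 - h)..1, P x * Q ((1 - x) / h))
          - ∑ i ∈ Finset.Icc 1 n, e i * h ^ i| ≤ C * h ^ (n + 1) by
    obtain ⟨e, C, hC⟩ := H
    refine ⟨e, Asymptotics.IsBigO.trans_isLittleO (g := fun h : ℝ => h ^ (n+1)) ?_ ?_⟩
    · rw [Asymptotics.isBigO_iff]
      refine ⟨C, ?_⟩
      filter_upwards [Ioc_mem_nhdsGT_of_mem (by constructor <;> norm_num : (0:ℝ) ∈ Ico (0:ℝ) 1)]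
        with h hh
      have h0 : 0 < h := hh.1
      rw [Real.norm_eq_abs, Real.norm_eq_abs, abs_of_pos (pow_pos h0 _)]
      exact hC h hh
    · have h1 : (fun h : ℝ => h ^ (n+1)) = fun h : ℝ => h ^ n * h := by
        funext h; rw [pow_succ]
      rw [h1]
      have h2 : (fun h : ℝ => h) =o[nhdsWithin 0 (Set.Ioi 0)] fun _ : ℝ => (1:ℝ) := by
        rw [Asymptotics.isLittleO_one_iff]
        exact tendsto_id.mono_left nhdsWithin_le_nhds
      simpa using (Asymptotics.isBigO_refl (fun h : ℝ => h ^ n) _).mul_isLittleO h2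
  -- translate P
  set Pt : ℝ → ℝ := fun s => P (1 - s) with hPtdef
  have hmaps : MapsTo (fun s : ℝ => 1 - s) (Icc 0 1) (Icc (0:ℝ) 1) := by
    intro s hs
    simp only [mem_Icc] at hs ⊢
    constructor <;> linarith [hs.1, hs.2]
  have hPt : ContDiffOn ℝ n Pt (Icc 0 1) :=
    hP.comp ((contDiff_const.sub contDiff_id).contDiffOn) hmaps
  have hPtc : ContinuousOn Pt (Icc 0 1) := hPt.continuousOn
  obtain ⟨C₂, hC₂⟩ := (isCompact_Icc (a := (0:ℝ)) (b := 1)).exists_bound_of_continuousOn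
    hQ.continuousOn
  have hC₂0 : 0 ≤ C₂ := le_trans (norm_nonneg _) (hC₂ 0 (by norm_num))
  -- case split on n
  rcases n with - | k
  · -- n = 0
    obtain ⟨C₁, hC₁⟩ := (isCompact_Icc (a := (0:ℝ)) (b := 1)).exists_bound_of_continuousOn
      hP.continuousOn
    have hC₁0 : 0 ≤ C₁ := le_trans (norm_nonneg _) (hC₁ 0 (by norm_num))
    refine ⟨fun _ => 0, C₁ * C₂, ?_⟩
    intro h hh
    have h0 : 0 < h := hh.1
    have h1 : h ≤ 1 := hh.2
    have hemp : Finset.Icc 1 0 = (∅ : Finset ℕ) := by simp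
    rw [hemp, Finset.sum_empty, sub_zero]
    have hb : ∀ x ∈ Set.uIoc (1-h) 1, ‖P x * Q ((1 - x) / h)‖ ≤ C₁ * C₂ := by
      intro x hx
      rw [Set.uIoc_of_le (by linarith : 1 - h ≤ 1)] at hx
      have hx1 : x ∈ Icc (0:ℝ) 1 := ⟨by linarith [hx.1], hx.2⟩
      have hy : (1 - x) / h ∈ Icc (0:ℝ) 1 :=
        ⟨div_nonneg (by linarith [hx.2]) h0.le, by rw [div_le_one h0]; linarith [hx.1]⟩
      rw [norm_mul]
      exact mul_le_mul (hC₁ x hx1) (hC₂ _ hy) (norm_nonneg _) hC₁0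
    have hest := intervalIntegral.norm_integral_le_of_norm_le_const hb
    rw [Real.norm_eq_abs] at hest
    calc |∫ x in (1-h)..1, P x * Q ((1 - x) / h)| ≤ C₁ * C₂ * |1 - (1 - h)| := hest
      _ = C₁ * C₂ * h ^ (0 + 1) := by rw [show (1 : ℝ) - (1 - h) = h by ring, abs_of_pos h0]; ring
  · -- n = k + 1
    set D : ℕ → ℝ := fun j => iteratedDerivWithin j Pt (Icc 0 1) 0 with hD
    set cQ : ℕ → ℝ := fun j => ∫ y in (0:ℝ)..1, y ^ j * Q y with hcQ
    have hidc : ContinuousOn (iteratedDerivWithin (k+1) Pt (Icc 0 1)) (Icc 0 1) :=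
      hPt.continuousOn_iteratedDerivWithin le_rfl (uniqueDiffOn_Icc zero_lt_one)
    obtain ⟨C₁, hC₁⟩ := (isCompact_Icc (a := (0:ℝ)) (b := 1)).exists_bound_of_continuousOn hidc
    have hC₁0 : 0 ≤ C₁ := le_trans (norm_nonneg _) (hC₁ 0 (by norm_num))
    refine ⟨fun i => ((Nat.factorial (i-1) : ℝ))⁻¹ * D (i-1) * cQ (i-1),
      C₂ * (C₁ / (Nat.factorial k)), ?_⟩
    intro h hh
    have h0 : 0 < h := hh.1
    have h1 : h ≤ 1 := hh.2
    -- Taylor bound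
    have hPt' : ContDiffOn ℝ ((k : ℕ∞) + 1) Pt (Icc 0 1) := by exact_mod_cast hPt
    have htb : ∀ s ∈ Icc (0:ℝ) 1,
        |Pt s - taylorWithinEval Pt k (Icc 0 1) 0 s| ≤ C₁ * s ^ (k+1) / (Nat.factorial k) := by
      intro s hs
      have := taylor_mean_remainder_bound (f := Pt) zero_le_one hPt' hs hC₁
      simpa using this
    -- Taylor polynomial as explicit sum
    set Tp : ℝ → ℝ := fun s => ∑ j ∈ Finset.range (k+1),
        ((Nat.factorial j : ℝ)⁻¹ * s ^ j) * D j with hTpdef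
    have hTpeq : ∀ s : ℝ, taylorWithinEval Pt k (Icc 0 1) 0 s = Tp s := by
      intro s
      rw [taylor_within_apply]
      apply Finset.sum_congr rfl
      intro j _
      simp [smul_eq_mul, hD]
    -- change of variables
    have hcov : (∫ x in (1-h)..1, P x * Q ((1 - x) / h))
        = h * ∫ y in (0:ℝ)..1, Pt (h * y) * Q y := by
      rw [bcpe_cov P Q h0.ne']
    have hPthc : ContinuousOn (fun y : ℝ => Pt (h * y)) (Icc 0 1) := by
      apply hPtc.comp (continuous_mul_left h).continuousOn
      intro y hy
      simp only [mem_Icc] at hy ⊢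
      constructor
      · exact mul_nonneg h0.le hy.1
      · nlinarith [hy.1, hy.2]
    have hint1 : IntervalIntegrable (fun y => Pt (h * y) * Q y) volume 0 1 := by
      apply ContinuousOn.intervalIntegrable
      rw [uIcc_of_le zero_le_one]
      exact hPthc.mul hQ.continuousOn
    have hTpc : Continuous fun y : ℝ => Tp (h * y) := by
      apply continuous_finset_sum
      intro j _
      exact (continuous_const.mul ((continuous_mul_left h).pow j)).mul
        continuous_const
    have hint2 : IntervalIntegrable (fun y => Tp (h * y) * Q y) volume 0 1 :=
      (hTpc.mul hQ).intervalIntegrable _ _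
    have hTint : (∫ y in (0:ℝ)..1, Tp (h * y) * Q y)
        = ∑ j ∈ Finset.range (k+1), ((Nat.factorial j : ℝ)⁻¹ * D j * h ^ j) * cQ j := by
      have hre : ∀ y : ℝ, Tp (h * y) * Q y = ∑ j ∈ Finset.range (k+1),
          ((Nat.factorial j : ℝ)⁻¹ * D j * h ^ j) * (y ^ j * Q y) := by
        intro y
        rw [hTpdef, Finset.sum_mul]
        apply Finset.sum_congr rfl
        intro j _
        rw [mul_pow]
        ring
      simp only [hre]
      rw [intervalIntegral.integral_finset_sum]
      · apply Finset.sum_congr rfl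
        intro j _
        rw [intervalIntegral.integral_const_mul]
      · intro j _
        exact (continuous_const.mul ((continuous_pow j).mul hQ)).intervalIntegrable _ _
    have hsum : (∑ i ∈ Finset.Icc 1 (k+1),
          ((Nat.factorial (i-1) : ℝ)⁻¹ * D (i-1) * cQ (i-1)) * h ^ i)
        = h * ∑ j ∈ Finset.range (k+1), ((Nat.factorial j : ℝ)⁻¹ * D j * h ^ j) * cQ j := by
      rw [bcpe_sum_Icc, Finset.mul_sum]
      apply Finset.sum_congr rfl
      intro j _
      simp only [Nat.add_sub_cancel]
      ring
    have hsplit : (∫ y in (0:ℝ)..1, Pt (h * y) * Q y)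
          - ∑ j ∈ Finset.range (k+1), ((Nat.factorial j : ℝ)⁻¹ * D j * h ^ j) * cQ j
        = ∫ y in (0:ℝ)..1, (Pt (h * y) - Tp (h * y)) * Q y := by
      rw [← hTint, ← intervalIntegral.integral_sub hint1 hint2]
      apply intervalIntegral.integral_congr
      intro y _
      ring
    have hbd : ∀ y ∈ Set.uIoc (0:ℝ) 1, ‖(Pt (h * y) - Tp (h * y)) * Q y‖
        ≤ (C₁ * h ^ (k+1) / (Nat.factorial k)) * C₂ := by
      intro y hy
      rw [Set.uIoc_of_le zero_le_one] at hy
      have hy0 : 0 ≤ y := le_of_lt hy.1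
      have hy1 : y ≤ 1 := hy.2
      have hs : h * y ∈ Icc (0:ℝ) 1 := ⟨mul_nonneg h0.le hy0, by nlinarith⟩
      rw [norm_mul, Real.norm_eq_abs, Real.norm_eq_abs]
      have hb1 : |Pt (h * y) - Tp (h * y)| ≤ C₁ * h ^ (k+1) / (Nat.factorial k) := by
        rw [← hTpeq]
        refine le_trans (htb _ hs) ?_
        have hple : (h * y) ^ (k+1) ≤ h ^ (k+1) := by
          apply pow_le_pow_left₀ (mul_nonneg h0.le hy0)
          nlinarith
        gcongr
      have hb2 : |Q y| ≤ C₂ := by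
        have := hC₂ y ⟨hy0, hy1⟩
        rwa [Real.norm_eq_abs] at this
      exact mul_le_mul hb1 hb2 (abs_nonneg _) (by positivity)
    have hest := intervalIntegral.norm_integral_le_of_norm_le_const hbd
    rw [Real.norm_eq_abs] at hest
    simp only []
    rw [hcov, hsum, ← mul_sub, abs_mul, abs_of_pos h0, hsplit]
    calc h * |∫ y in (0:ℝ)..1, (Pt (h * y) - Tp (h * y)) * Q y|
        ≤ h * ((C₁ * h ^ (k+1) / (Nat.factorial k)) * C₂ * |1 - 0|) :=
          mul_le_mul_of_nonneg_left hest h0.le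
      _ = C₂ * (C₁ / (Nat.factorial k)) * h ^ (k + 1 + 1) := by
          rw [show |(1:ℝ) - 0| = 1 by norm_num]
          ring

theorem boundary_cap_power_expansion (d q t r : ℕ) (hd : Odd d) (hq : 1 ≤ q) (ht : 1 ≤ t)
    (hqr : q ≤ r)
    (p : ℕ → ℕ → ℝ → ℝ)
    (hp : ∀ m ℓ, ContDiffOn ℝ (r - q : ℕ) (p m ℓ) (Set.Icc (0:ℝ) 1)) :
    (∃ p' : ℕ → ℕ → ℝ → ℝ,
        (∀ m ℓ, ContDiffOn ℝ (r - q : ℕ) (p' m ℓ) (Set.Icc (0:ℝ) 1))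
        ∧ ∀ h ∈ Set.Ioc (0:ℝ) 1, ∀ x ∈ Set.Icc (1 - h) 1,
            (∑ m ∈ Finset.range (q + 1), ∑ ℓ ∈ Finset.range (d + q + 1),
                p m ℓ x * (Real.sqrt (1 - ((1 - x) / h) ^ 2)) ^ ℓ * ((1 - x) / h) ^ m) ^ t
              = ∑ m ∈ Finset.range (q * t + 1), ∑ ℓ ∈ Finset.range ((d + q) * t + 1),
                  p' m ℓ x * (Real.sqrt (1 - ((1 - x) / h) ^ 2)) ^ ℓ * ((1 - x) / h) ^ m)
    ∧ (∃ e : ℕ → ℝ,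
        (fun h : ℝ =>
            (∫ x in (1 - h)..1,
              (∑ m ∈ Finset.range (q + 1), ∑ ℓ ∈ Finset.range (d + q + 1),
                  p m ℓ x * (Real.sqrt (1 - ((1 - x) / h) ^ 2)) ^ ℓ * ((1 - x) / h) ^ m) ^ t)
            - ∑ i ∈ Finset.Icc 1 (r - q), e i * h ^ i)
          =o[nhdsWithin 0 (Set.Ioi 0)] fun h : ℝ => h ^ (r - q)) := by
  classical
  set T : Finset (Fin t → ℕ × ℕ) :=
    Fintype.piFinset fun _ => (Finset.range (q+1)) ×ˢ (Finset.range (d+q+1)) with hT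
  -- algebraic expansion of the t-th power
  have halg : ∀ x u : ℝ,
      (∑ m ∈ Finset.range (q + 1), ∑ ℓ ∈ Finset.range (d + q + 1),
          p m ℓ x * (Real.sqrt (1 - u ^ 2)) ^ ℓ * u ^ m) ^ t
        = ∑ f ∈ T, (∏ i, p (f i).1 (f i).2 x)
            * ((Real.sqrt (1 - u ^ 2)) ^ (∑ i, (f i).2) * u ^ (∑ i, (f i).1)) := by
    intro x u
    have e1 : (∑ m ∈ Finset.range (q + 1), ∑ ℓ ∈ Finset.range (d + q + 1),
        p m ℓ x * (Real.sqrt (1 - u ^ 2)) ^ ℓ * u ^ m)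
        = ∑ z ∈ (Finset.range (q+1)) ×ˢ (Finset.range (d+q+1)),
            p z.1 z.2 x * (Real.sqrt (1 - u ^ 2)) ^ z.2 * u ^ z.1 := by
      rw [Finset.sum_product]
    have e2 : ∀ a : ℝ, a ^ t = ∏ _i : Fin t, a := by
      intro a; rw [Finset.prod_const, Finset.card_univ, Fintype.card_fin]
    rw [e1, e2, Finset.prod_univ_sum]
    apply Finset.sum_congr rfl
    intro f _
    rw [Finset.prod_mul_distrib, Finset.prod_mul_distrib,
        Finset.prod_pow_eq_pow_sum, Finset.prod_pow_eq_pow_sum]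
    ring
  have hkey : ∀ f ∈ T, ((∑ i, (f i).1, ∑ i, (f i).2) : ℕ × ℕ)
      ∈ (Finset.range (q*t+1)) ×ˢ (Finset.range ((d+q)*t+1)) := by
    intro f hf
    rw [hT, Fintype.mem_piFinset] at hf
    rw [Finset.mem_product, Finset.mem_range, Finset.mem_range]
    have hb1 : ∑ i, (f i).1 ≤ t * q := by
      calc ∑ i, (f i).1 ≤ ∑ _i : Fin t, q := Finset.sum_le_sum (fun i _ => by
            have := hf i
            rw [Finset.mem_product, Finset.mem_range, Finset.mem_range] at this
            omega)
        _ = t * q := by rw [Finset.sum_const, Finset.card_univ, Fintype.card_fin, smul_eq_mul]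
    have hb2 : ∑ i, (f i).2 ≤ t * (d + q) := by
      calc ∑ i, (f i).2 ≤ ∑ _i : Fin t, (d + q) := Finset.sum_le_sum (fun i _ => by
            have := hf i
            rw [Finset.mem_product, Finset.mem_range, Finset.mem_range] at this
            omega)
        _ = t * (d + q) := by
          rw [Finset.sum_const, Finset.card_univ, Fintype.card_fin, smul_eq_mul]
    constructor
    · exact Nat.lt_succ_of_le (by rw [mul_comm]; exact hb1)
    · exact Nat.lt_succ_of_le (by rw [mul_comm]; exact hb2)
  constructor
  · -- Part 1
    refine ⟨fun m ℓ x => ∑ f ∈ T.filter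
        (fun f => ((∑ i, (f i).1, ∑ i, (f i).2) : ℕ × ℕ) = (m, ℓ)),
        ∏ i, p (f i).1 (f i).2 x, ?_, ?_⟩
    · intro m ℓ
      exact ContDiffOn.sum fun f _ => contDiffOn_prod fun i _ => hp _ _
    · intro h hh x hx
      set u : ℝ := (1 - x) / h with hu
      set A : ℝ := Real.sqrt (1 - u ^ 2) with hA
      rw [halg x u]
      rw [← Finset.sum_fiberwise_of_maps_to hkey
        (fun f => (∏ i, p (f i).1 (f i).2 x) * (A ^ (∑ i, (f i).2) * u ^ (∑ i, (f i).1)))]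
      rw [Finset.sum_product]
      apply Finset.sum_congr rfl
      intro m hm
      apply Finset.sum_congr rfl
      intro ℓ hℓ
      rw [Finset.sum_mul, Finset.sum_mul]
      apply Finset.sum_congr rfl
      intro f hf
      rw [Finset.mem_filter] at hf
      have h1 : (∑ i, (f i).1) = m := by
        have := hf.2; exact (Prod.mk.injEq _ _ _ _).mp this |>.1
      have h2 : (∑ i, (f i).2) = ℓ := by
        have := hf.2; exact (Prod.mk.injEq _ _ _ _).mp this |>.2
      rw [h1, h2, mul_assoc]
  · -- Part 2
    have hQc : ∀ M L : ℕ, Continuous fun y : ℝ => (Real.sqrt (1 - y ^ 2)) ^ L * y ^ M :=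
      fun M L => ((Real.continuous_sqrt.comp
        (continuous_const.sub (continuous_pow 2))).pow L).mul (continuous_pow M)
    have hPf : ∀ f : Fin t → ℕ × ℕ, ContDiffOn ℝ (r - q : ℕ)
        (fun x => ∏ i, p (f i).1 (f i).2 x) (Icc 0 1) :=
      fun f => contDiffOn_prod fun i _ => hp _ _
    choose E hE using fun f : Fin t → ℕ × ℕ =>
      bcpe_key (r - q) (fun x => ∏ i, p (f i).1 (f i).2 x)
        (fun y => (Real.sqrt (1 - y ^ 2)) ^ (∑ i, (f i).2) * y ^ (∑ i, (f i).1))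
        (hPf f) (hQc _ _)
    refine ⟨fun i => ∑ f ∈ T, E f i, ?_⟩
    have hsumo : (fun h : ℝ => ∑ f ∈ T,
        ((∫ x in (1 - h)..1, (∏ i, p (f i).1 (f i).2 x)
            * ((Real.sqrt (1 - ((1 - x) / h) ^ 2)) ^ (∑ i, (f i).2)
              * ((1 - x) / h) ^ (∑ i, (f i).1)))
          - ∑ i ∈ Finset.Icc 1 (r - q), E f i * h ^ i))
        =o[nhdsWithin 0 (Set.Ioi 0)] fun h : ℝ => h ^ (r - q) :=
      Asymptotics.IsLittleO.fun_sum fun f _ => hE f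
    apply hsumo.congr' ?_ EventuallyEq.rfl
    filter_upwards [Ioc_mem_nhdsGT_of_mem
      (by constructor <;> norm_num : (0:ℝ) ∈ Ico (0:ℝ) 1)] with h hh
    have h0 : 0 < h := hh.1
    have h1 : h ≤ 1 := hh.2
    rw [Finset.sum_sub_distrib]
    congr 1
    · -- integrals
      rw [← intervalIntegral.integral_finset_sum]
      · apply intervalIntegral.integral_congr
        intro x _
        exact (halg x ((1 - x) / h)).symm
      · intro f _
        apply ContinuousOn.intervalIntegrable
        rw [uIcc_of_le (by linarith : 1 - h ≤ 1)]
        apply ContinuousOn.mul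
        · exact ((hPf f).continuousOn).mono (Icc_subset_Icc (by linarith) le_rfl)
        · exact ((hQc (∑ i, (f i).1) (∑ i, (f i).2)).comp
            ((continuous_const.sub continuous_id).div_const h)).continuousOn
    · -- sums
      rw [Finset.sum_comm]
      apply Finset.sum_congr rfl
      intro i _
      rw [Finset.sum_mul]
end
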